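/- Let g : ℕ⁺ → ℂ with Σ_{n≥1} 2^{ω(n)} |(μ* × g)(n)| / n < ∞, where μ* × g is the unitary convolution with μ*. Then for every n ≥ 1, g(n) = Σ_{q=1}^∞ ã_q c̃_q(n), with the series absolutely convergent, where ã_q = (1/q) Σ_{m ≥ 1, gcd(m,q)=1} (μ* × g)(mq)/m. -/

import Mathlib

def uDivisors (n : ℕ) : Finset ℕ := n.divisors.filter (fun d => Nat.gcd d (n / d) = 1)

def gcud (n q : ℕ) : ℕ := (uDivisors n ∩ uDivisors q).sup id

def mustar (n : ℕ) : ℤ := (-1) ^ n.primeFactors.card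

def ctilde (q n : ℕ) : ℤ := ∑ d ∈ uDivisors (gcud n q), (d : ℤ) * mustar (q / d)

/-- The unitary convolution of two arithmetic functions valued in ℂ. -/
noncomputable def uconv (f g : ℕ → ℂ) (n : ℕ) : ℂ := ∑ d ∈ uDivisors n, f d * g (n / d)



lemma mem_uDivisors {d n : ℕ} : d ∈ uDivisors n ↔ d ∣ n ∧ Nat.gcd d (n / d) = 1 ∧ n ≠ 0 := by
  simp [uDivisors, Nat.mem_divisors]; tauto

lemma uDivisors_zero : uDivisors 0 = ∅ := by simp [uDivisors, Nat.divisors]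

lemma ne_zero_of_mem_uDivisors {d n : ℕ} (h : d ∈ uDivisors n) : d ≠ 0 := by
  rw [mem_uDivisors] at h
  rintro rfl
  exact h.2.2 (Nat.eq_zero_of_zero_dvd h.1)

lemma pos_of_mem_uDivisors {d n : ℕ} (h : d ∈ uDivisors n) : 0 < d :=
  Nat.pos_of_ne_zero (ne_zero_of_mem_uDivisors h)

lemma one_mem_uDivisors {n : ℕ} (hn : n ≠ 0) : 1 ∈ uDivisors n := by
  simp [mem_uDivisors, hn]

lemma self_mem_uDivisors {n : ℕ} (hn : n ≠ 0) : n ∈ uDivisors n := by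
  simp [mem_uDivisors, hn, Nat.div_self (Nat.pos_of_ne_zero hn)]

lemma compl_mem_uDivisors {d n : ℕ} (h : d ∈ uDivisors n) : n / d ∈ uDivisors n := by
  rw [mem_uDivisors] at h ⊢
  obtain ⟨h1, h2, h3⟩ := h
  refine ⟨Nat.div_dvd_of_dvd h1, ?_, h3⟩
  rw [Nat.div_div_self h1 h3, Nat.gcd_comm]
  exact h2

-- n / e = (d/e) * (n/d) when e ∣ d ∣ n, e,d ≠ 0
lemma udiv_key {e d n : ℕ} (he : e ∣ d) (hd : d ∣ n) (hd0 : d ≠ 0) :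
    n / e = (d / e) * (n / d) := by
  rw [Nat.div_mul_div_comm he hd, mul_comm e d, Nat.mul_div_mul_left _ _ (Nat.pos_of_ne_zero hd0)]

lemma uDivisors_trans {e d n : ℕ} (he : e ∈ uDivisors d) (hd : d ∈ uDivisors n) :
    e ∈ uDivisors n := by
  rw [mem_uDivisors] at he hd ⊢
  obtain ⟨he1, he2, he3⟩ := he
  obtain ⟨hd1, hd2, hd3⟩ := hd
  refine ⟨he1.trans hd1, ?_, hd3⟩
  rw [udiv_key he1 hd1 he3]
  exact Nat.Coprime.mul_right he2 (Nat.Coprime.coprime_dvd_left he1 hd2)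

-- if d ∥ n, c ∥ d then d/c ∥ n/c
lemma div_mem_uDivisors_div {c d n : ℕ} (hc : c ∈ uDivisors d) (hd : d ∈ uDivisors n) :
    d / c ∈ uDivisors (n / c) := by
  have hc0 : c ≠ 0 := ne_zero_of_mem_uDivisors hc
  rw [mem_uDivisors] at hc hd ⊢
  obtain ⟨hc1, hc2, hc3⟩ := hc
  obtain ⟨hd1, hd2, hd3⟩ := hd
  have key : n / c = (d / c) * (n / d) := udiv_key hc1 hd1 hc3
  have hdc0 : d / c ≠ 0 := by
    intro h0
    rw [Nat.div_eq_zero_iff, or_iff_right hc0] at h0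
    exact absurd (Nat.le_antisymm (le_of_lt h0) (Nat.le_of_dvd (Nat.pos_of_ne_zero hc3) hc1)) (by omega)
  refine ⟨⟨n / d, key⟩, ?_, ?_⟩
  · rw [key, Nat.mul_div_cancel_left _ (Nat.pos_of_ne_zero hdc0)]
    exact Nat.Coprime.coprime_dvd_left (Nat.div_dvd_of_dvd hc1) hd2
  · intro h0
    rw [Nat.div_eq_zero_iff, or_iff_right hc0] at h0
    exact absurd (Nat.le_antisymm (le_of_lt h0) (Nat.le_of_dvd (Nat.pos_of_ne_zero hd3) (hc1.trans hd1))) (by omega)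

-- if e ∥ n, c ∥ (n/e) then e*c ∥ n
lemma mul_mem_uDivisors {e c n : ℕ} (he : e ∈ uDivisors n) (hc : c ∈ uDivisors (n / e)) :
    e * c ∈ uDivisors n := by
  have he0 : e ≠ 0 := ne_zero_of_mem_uDivisors he
  have hc0 : c ≠ 0 := ne_zero_of_mem_uDivisors hc
  rw [mem_uDivisors] at he hc ⊢
  obtain ⟨he1, he2, he3⟩ := he
  obtain ⟨hc1, hc2, hc3⟩ := hc
  have hdvd : e * c ∣ n := by
    obtain ⟨k, hk⟩ := hc1
    exact ⟨k, by rw [mul_assoc, ← hk, Nat.mul_div_cancel' he1]⟩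
  refine ⟨hdvd, ?_, he3⟩
  have hq : n / (e * c) = (n / e) / c := by rw [Nat.div_div_eq_div_mul]
  rw [hq]
  apply Nat.Coprime.mul
  · exact Nat.Coprime.coprime_dvd_right (Nat.div_dvd_of_dvd hc1) he2
  · exact hc2

-- e ∥ e*c when coprime e c, both nonzero
lemma mem_uDivisors_mul_self {e c : ℕ} (he : e ≠ 0) (hc : c ≠ 0) (h : Nat.Coprime e c) :
    e ∈ uDivisors (e * c) := by
  rw [mem_uDivisors]
  exact ⟨⟨c, rfl⟩, by rw [Nat.mul_div_cancel_left _ (Nat.pos_of_ne_zero he)]; exact h,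
    mul_ne_zero he hc⟩

-- d ∥ n, g ∥ n, d ∣ g ⇒ d ∥ g
lemma mem_uDivisors_of_dvd {d gg n : ℕ} (hd : d ∈ uDivisors n) (hg : gg ∈ uDivisors n)
    (hdg : d ∣ gg) : d ∈ uDivisors gg := by
  have hg0 := ne_zero_of_mem_uDivisors hg
  rw [mem_uDivisors] at hd hg ⊢
  refine ⟨hdg, ?_, hg0⟩
  have : gg / d ∣ n / d := ⟨n / gg, udiv_key hdg hg.1 hg0⟩
  exact Nat.Coprime.coprime_dvd_right this hd.2.1


lemma lcm_mem_uDivisors {d e n : ℕ} (hd : d ∈ uDivisors n) (he : e ∈ uDivisors n) :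
    Nat.lcm d e ∈ uDivisors n := by
  have hn0 : n ≠ 0 := (mem_uDivisors.mp hd).2.2
  have hd1 := (mem_uDivisors.mp hd).1
  have he1 := (mem_uDivisors.mp he).1
  have hl : Nat.lcm d e ∣ n := Nat.lcm_dvd hd1 he1
  have hl0 : Nat.lcm d e ≠ 0 :=
    Nat.lcm_ne_zero (ne_zero_of_mem_uDivisors hd) (ne_zero_of_mem_uDivisors he)
  rw [mem_uDivisors]
  refine ⟨hl, ?_, hn0⟩
  have hdl : n / Nat.lcm d e ∣ n / d :=
    ⟨Nat.lcm d e / d, by rw [udiv_key (Nat.dvd_lcm_left d e) hl hl0]; ring⟩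
  have hel : n / Nat.lcm d e ∣ n / e :=
    ⟨Nat.lcm d e / e, by rw [udiv_key (Nat.dvd_lcm_right d e) hl hl0]; ring⟩
  have h1 : Nat.Coprime d (n / Nat.lcm d e) :=
    Nat.Coprime.coprime_dvd_right hdl (mem_uDivisors.mp hd).2.1
  have h2 : Nat.Coprime e (n / Nat.lcm d e) :=
    Nat.Coprime.coprime_dvd_right hel (mem_uDivisors.mp he).2.1
  exact Nat.Coprime.coprime_dvd_left (Nat.lcm_dvd_mul d e) (Nat.Coprime.mul h1 h2)

lemma gcud_mem {n q : ℕ} (hn : n ≠ 0) (hq : q ≠ 0) :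
    gcud n q ∈ uDivisors n ∩ uDivisors q := by
  have hne : (uDivisors n ∩ uDivisors q).Nonempty :=
    ⟨1, Finset.mem_inter.mpr ⟨one_mem_uDivisors hn, one_mem_uDivisors hq⟩⟩
  obtain ⟨b, hb, hbe⟩ := Finset.exists_mem_eq_sup _ hne id
  rw [gcud, hbe]; exact hb

lemma le_gcud {n q d : ℕ} (hd : d ∈ uDivisors n ∩ uDivisors q) : d ≤ gcud n q :=
  Finset.le_sup (f := id) hd

lemma uDivisors_gcud {n q : ℕ} (hn : n ≠ 0) (hq : q ≠ 0) :
    uDivisors (gcud n q) = uDivisors n ∩ uDivisors q := by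
  have hg := gcud_mem hn hq
  rw [Finset.mem_inter] at hg
  ext e
  rw [Finset.mem_inter]
  constructor
  · intro he
    exact ⟨uDivisors_trans he hg.1, uDivisors_trans he hg.2⟩
  · intro ⟨he1, he2⟩
    have hlcm : Nat.lcm e (gcud n q) ∈ uDivisors n ∩ uDivisors q :=
      Finset.mem_inter.mpr ⟨lcm_mem_uDivisors he1 hg.1, lcm_mem_uDivisors he2 hg.2⟩
    have hle : Nat.lcm e (gcud n q) ≤ gcud n q := le_gcud hlcm
    have hdvd : e ∣ gcud n q := by
      have h1 : gcud n q ∣ Nat.lcm e (gcud n q) := Nat.dvd_lcm_right _ _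
      have h2 : Nat.lcm e (gcud n q) = gcud n q :=
        Nat.le_antisymm hle (Nat.le_of_dvd (Nat.pos_of_ne_zero (by
          exact Nat.lcm_ne_zero (ne_zero_of_mem_uDivisors he1)
            (ne_zero_of_mem_uDivisors hg.1))) h1)
      exact h2 ▸ Nat.dvd_lcm_left _ _
    exact mem_uDivisors_of_dvd he1 hg.1 hdvd


noncomputable def phiU (m : ℕ) (S : Finset ℕ) : ℕ := ∏ p ∈ S, p ^ m.factorization p

lemma phiU_primeFactors_self {m : ℕ} (hm : m ≠ 0) : phiU m m.primeFactors = m := by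
  conv_rhs => rw [← Nat.factorization_prod_pow_eq_self hm]
  rfl

lemma phiU_ne_zero (m : ℕ) (S : Finset ℕ) (hS : ∀ p ∈ S, p ≠ 0) : phiU m S ≠ 0 := by
  rw [phiU, Finset.prod_ne_zero_iff]
  intro p hp
  exact pow_ne_zero _ (hS p hp)

lemma phiU_mul_compl {m : ℕ} {S : Finset ℕ} (hm : m ≠ 0) (hS : S ⊆ m.primeFactors) :
    phiU m S * phiU m (m.primeFactors \ S) = m := by
  rw [phiU, phiU, ← Finset.prod_union (Finset.disjoint_sdiff),
    Finset.union_sdiff_of_subset hS]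
  exact phiU_primeFactors_self hm

lemma phiU_coprime_compl {m : ℕ} {S T : Finset ℕ} (hS : S ⊆ m.primeFactors)
    (hT : T ⊆ m.primeFactors) (hST : Disjoint S T) :
    Nat.Coprime (phiU m S) (phiU m T) := by
  apply Nat.Coprime.prod_left
  intro p hp
  apply Nat.Coprime.prod_right
  intro q hq
  have hpq : p ≠ q := fun h => (Finset.disjoint_left.mp hST hp) (h ▸ hq)
  exact Nat.Coprime.pow _ _ ((Nat.coprime_primes
    (Nat.prime_of_mem_primeFactors (hS hp)) (Nat.prime_of_mem_primeFactors (hT hq))).mpr hpq)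

lemma phiU_mem_uDivisors {m : ℕ} {S : Finset ℕ} (hm : m ≠ 0) (hS : S ⊆ m.primeFactors) :
    phiU m S ∈ uDivisors m := by
  have hmul := phiU_mul_compl hm hS
  have hpos : 0 < phiU m S :=
    Nat.pos_of_ne_zero (phiU_ne_zero m S fun p hp => (Nat.pos_of_mem_primeFactors (hS hp)).ne')
  rw [mem_uDivisors]
  refine ⟨⟨_, hmul.symm⟩, ?_, hm⟩
  have hdiv : m / phiU m S = phiU m (m.primeFactors \ S) :=
    Nat.div_eq_of_eq_mul_left hpos (by rw [mul_comm]; exact hmul.symm)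
  rw [hdiv]
  exact phiU_coprime_compl hS (Finset.sdiff_subset) (Finset.disjoint_sdiff)

lemma primeFactors_phiU {m : ℕ} {S : Finset ℕ} (hm : m ≠ 0) (hS : S ⊆ m.primeFactors) :
    (phiU m S).primeFactors = S := by
  ext q
  rw [Nat.mem_primeFactors]
  constructor
  · rintro ⟨hq, hdvd, -⟩
    obtain ⟨p, hp, hqp⟩ := hq.prime.exists_mem_finset_dvd hdvd
    have hpprime := Nat.prime_of_mem_primeFactors (hS hp)
    have : q = p := by
      have := hq.prime.dvd_of_dvd_pow (n := m.factorization p) hqp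
      exact (Nat.prime_dvd_prime_iff_eq hq hpprime).mp this
    exact this ▸ hp
  · intro hq
    have hqP := hS hq
    have hqprime := Nat.prime_of_mem_primeFactors hqP
    have hfpos : 0 < m.factorization q :=
      Nat.Prime.factorization_pos_of_dvd hqprime hm (Nat.dvd_of_mem_primeFactors hqP)
    refine ⟨hqprime, ?_, phiU_ne_zero m S fun p hp => (Nat.pos_of_mem_primeFactors (hS hp)).ne'⟩
    calc q ∣ q ^ m.factorization q := dvd_pow_self q hfpos.ne'
    _ ∣ phiU m S := Finset.dvd_prod_of_mem _ hq

lemma factorization_eq_of_mem_uDivisors {d m p : ℕ} (hd : d ∈ uDivisors m)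
    (hp : p ∈ d.primeFactors) : d.factorization p = m.factorization p := by
  obtain ⟨hdvd, hcop, hm⟩ := mem_uDivisors.mp hd
  have hd0 : d ≠ 0 := ne_zero_of_mem_uDivisors hd
  have hple : d.factorization p ≤ m.factorization p :=
    (Nat.factorization_le_iff_dvd hd0 hm).mpr hdvd p
  have hpd : p ∣ d := Nat.dvd_of_mem_primeFactors hp
  have hnd : ¬ p ∣ (m / d) := by
    intro hpmd
    have h1 : p ∣ Nat.gcd d (m / d) := Nat.dvd_gcd hpd hpmd
    rw [hcop] at h1
    exact (Nat.prime_of_mem_primeFactors hp).one_lt.ne' (Nat.eq_one_of_dvd_one h1)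
  have h0 : (m / d).factorization p = 0 := Nat.factorization_eq_zero_of_not_dvd hnd
  have h2 : (m / d).factorization = m.factorization - d.factorization :=
    Nat.factorization_div hdvd
  have h3 : m.factorization p - d.factorization p = 0 := by
    have := congrFun (congrArg (fun f => f.toFun) h2) p
    simpa using h0 ▸ this.symm
  omega


lemma phiU_of_mem_uDivisors {d m : ℕ} (hd : d ∈ uDivisors m) : phiU m d.primeFactors = d := by
  have hd0 : d ≠ 0 := ne_zero_of_mem_uDivisors hd
  calc phiU m d.primeFactors = ∏ p ∈ d.primeFactors, p ^ d.factorization p :=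
        Finset.prod_congr rfl fun p hp => by
          rw [factorization_eq_of_mem_uDivisors hd hp]
    _ = d := phiU_primeFactors_self hd0

lemma primeFactors_subset_of_mem_uDivisors {d m : ℕ} (hd : d ∈ uDivisors m) :
    d.primeFactors ⊆ m.primeFactors :=
  Nat.primeFactors_mono (mem_uDivisors.mp hd).1 (mem_uDivisors.mp hd).2.2

lemma sum_uDivisors_eq_sum_powerset {M : Type*} [AddCommMonoid M] {m : ℕ} (hm : m ≠ 0)
    (f : ℕ → M) :
    ∑ d ∈ uDivisors m, f d = ∑ S ∈ m.primeFactors.powerset, f (phiU m S) := by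
  refine Finset.sum_nbij' (fun d => d.primeFactors) (fun S => phiU m S) ?_ ?_ ?_ ?_ ?_
  · intro d hd
    exact Finset.mem_powerset.mpr (primeFactors_subset_of_mem_uDivisors hd)
  · intro S hS
    exact phiU_mem_uDivisors hm (Finset.mem_powerset.mp hS)
  · intro d hd
    exact phiU_of_mem_uDivisors hd
  · intro S hS
    exact primeFactors_phiU hm (Finset.mem_powerset.mp hS)
  · intro d hd
    rw [phiU_of_mem_uDivisors hd]

lemma sum_mustar_uDivisors {m : ℕ} (hm : m ≠ 0) :
    ∑ e ∈ uDivisors m, mustar e = if m = 1 then 1 else 0 := by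
  rw [sum_uDivisors_eq_sum_powerset hm]
  have : ∀ S ∈ m.primeFactors.powerset, mustar (phiU m S) = (-1 : ℤ) ^ S.card := by
    intro S hS
    rw [mustar, primeFactors_phiU hm (Finset.mem_powerset.mp hS)]
  rw [Finset.sum_congr rfl this, Finset.sum_powerset_neg_one_pow_card]
  congr 1
  rw [Nat.primeFactors_eq_empty]
  simp [hm]

lemma card_uDivisors {m : ℕ} (hm : m ≠ 0) :
    (uDivisors m).card = 2 ^ m.primeFactors.card := by
  have : (uDivisors m).card = ∑ d ∈ uDivisors m, 1 := by simp
  rw [this, sum_uDivisors_eq_sum_powerset hm]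
  simp [Finset.card_powerset]



section swaps
variable {M : Type*} [AddCommMonoid M]

lemma sum_uDivisors_compl (q : ℕ) (F : ℕ → ℕ → M) :
    ∑ d ∈ uDivisors q, F d (q / d) = ∑ d ∈ uDivisors q, F (q / d) d := by
  refine Finset.sum_nbij' (fun d => q / d) (fun d => q / d) ?_ ?_ ?_ ?_ ?_
  · intro d hd; exact compl_mem_uDivisors hd
  · intro d hd; exact compl_mem_uDivisors hd
  · intro d hd
    exact Nat.div_div_self (mem_uDivisors.mp hd).1 (mem_uDivisors.mp hd).2.2
  · intro d hd
    exact Nat.div_div_self (mem_uDivisors.mp hd).1 (mem_uDivisors.mp hd).2.2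
  · intro d hd
    rw [Nat.div_div_self (mem_uDivisors.mp hd).1 (mem_uDivisors.mp hd).2.2]

lemma sum_uDivisors_pairs (k : ℕ) (F : ℕ → ℕ → M) :
    ∑ q ∈ uDivisors k, ∑ d ∈ uDivisors q, F d (q / d) =
      ∑ d ∈ uDivisors k, ∑ e ∈ uDivisors (k / d), F d e := by
  rw [Finset.sum_sigma', Finset.sum_sigma']
  refine Finset.sum_nbij' (fun p => ⟨p.2, p.1 / p.2⟩) (fun p => ⟨p.1 * p.2, p.1⟩) ?_ ?_ ?_ ?_ ?_
  · rintro ⟨q, d⟩ hp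
    rw [Finset.mem_sigma] at hp ⊢
    exact ⟨uDivisors_trans hp.2 hp.1, div_mem_uDivisors_div hp.2 hp.1⟩
  · rintro ⟨d, e⟩ hp
    rw [Finset.mem_sigma] at hp ⊢
    have hd := hp.1
    have he := hp.2
    have hcop : Nat.Coprime d e :=
      Nat.Coprime.coprime_dvd_right (mem_uDivisors.mp he).1 (mem_uDivisors.mp hd).2.1
    refine ⟨mul_mem_uDivisors hd he, ?_⟩
    exact mem_uDivisors_mul_self (ne_zero_of_mem_uDivisors hd) (ne_zero_of_mem_uDivisors he) hcop
  · rintro ⟨q, d⟩ hp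
    rw [Finset.mem_sigma] at hp
    have : d * (q / d) = q := Nat.mul_div_cancel' (mem_uDivisors.mp hp.2).1
    simp [this]
  · rintro ⟨d, e⟩ hp
    rw [Finset.mem_sigma] at hp
    have : d * e / d = e := Nat.mul_div_cancel_left _ (pos_of_mem_uDivisors hp.1)
    simp [this]
  · rintro ⟨q, d⟩ hp
    rfl

end swaps

lemma uconv_comm_form (f g : ℕ → ℂ) (q : ℕ) :
    uconv f g q = ∑ d ∈ uDivisors q, g d * f (q / d) := by
  rw [uconv, sum_uDivisors_compl q (fun d c => f d * g c)]
  exact Finset.sum_congr rfl fun d _ => mul_comm _ _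

lemma div_eq_one_iff_of_mem {d k : ℕ} (hd : d ∈ uDivisors k) : k / d = 1 ↔ d = k := by
  obtain ⟨h1, -, h3⟩ := mem_uDivisors.mp hd
  constructor
  · intro h
    conv_rhs => rw [← Nat.mul_div_cancel' h1, h, mul_one]
  · rintro rfl
    exact Nat.div_self (Nat.pos_of_ne_zero h3)

-- unitary Mobius inversion
lemma sum_uDivisors_uconv (g : ℕ → ℂ) {n : ℕ} (hn : n ≠ 0) :
    ∑ d ∈ uDivisors n, uconv (fun m => (mustar m : ℂ)) g d = g n := by
  have : ∀ d ∈ uDivisors n, uconv (fun m => (mustar m : ℂ)) g d =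
      ∑ e ∈ uDivisors d, g e * (mustar (d / e) : ℂ) := fun d _ => uconv_comm_form _ g d
  rw [Finset.sum_congr rfl this, sum_uDivisors_pairs n (fun d c => g d * (mustar c : ℂ))]
  have : ∀ d ∈ uDivisors n, ∑ e ∈ uDivisors (n / d), g d * (mustar e : ℂ) =
      if d = n then g n else 0 := by
    intro d hd
    rw [← Finset.mul_sum]
    have hnd : n / d ≠ 0 := ne_zero_of_mem_uDivisors (compl_mem_uDivisors hd)
    have hsum : ∑ e ∈ uDivisors (n / d), (mustar e : ℂ) = if n / d = 1 then 1 else 0 := by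
      rw [← Int.cast_sum, sum_mustar_uDivisors hnd]
      split <;> simp
    rw [hsum]
    simp only [div_eq_one_iff_of_mem hd]
    rcases eq_or_ne d n with rfl | hne
    · simp
    · simp [hne]
  rw [Finset.sum_congr rfl this, Finset.sum_ite_eq' (uDivisors n) n (fun _ => g n)]
  simp [self_mem_uDivisors hn]

lemma ctilde_eq_sum_inter {q n : ℕ} (hn : n ≠ 0) (hq : q ≠ 0) :
    ctilde q n = ∑ d ∈ uDivisors q, (if d ∈ uDivisors n then (d : ℤ) else 0) * mustar (q / d) := by
  rw [ctilde, uDivisors_gcud hn hq, Finset.inter_comm, ← Finset.filter_mem_eq_inter,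
    Finset.sum_filter]
  exact Finset.sum_congr rfl fun d _ => by split <;> simp

lemma sum_ctilde_uDivisors {n : ℕ} (hn : n ≠ 0) (k : ℕ) :
    ∑ q ∈ uDivisors k, ctilde q n = if k ∈ uDivisors n then (k : ℤ) else 0 := by
  rcases eq_or_ne k 0 with rfl | hk
  · rw [uDivisors_zero]
    have : (0 : ℕ) ∉ uDivisors n := fun h => ne_zero_of_mem_uDivisors h rfl
    simp [this]
  · have : ∀ q ∈ uDivisors k, ctilde q n =
        ∑ d ∈ uDivisors q, (if d ∈ uDivisors n then (d : ℤ) else 0) * mustar (q / d) :=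
      fun q hq => ctilde_eq_sum_inter hn (ne_zero_of_mem_uDivisors hq)
    rw [Finset.sum_congr rfl this,
      sum_uDivisors_pairs k (fun d c => (if d ∈ uDivisors n then (d : ℤ) else 0) * mustar c)]
    have : ∀ d ∈ uDivisors k,
        ∑ e ∈ uDivisors (k / d), (if d ∈ uDivisors n then (d : ℤ) else 0) * mustar e =
        if d = k then (if k ∈ uDivisors n then (k : ℤ) else 0) else 0 := by
      intro d hd
      rw [← Finset.mul_sum]
      have hkd : k / d ≠ 0 := ne_zero_of_mem_uDivisors (compl_mem_uDivisors hd)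
      rw [sum_mustar_uDivisors hkd]
      simp only [div_eq_one_iff_of_mem hd]
      rcases eq_or_ne d k with rfl | hne
      · simp
      · simp [hne]
    rw [Finset.sum_congr rfl this,
      Finset.sum_ite_eq' (uDivisors k) k (fun _ => if k ∈ uDivisors n then (k : ℤ) else 0)]
    simp [self_mem_uDivisors hk]

lemma abs_ctilde_le {n q : ℕ} (hn : n ≠ 0) (hq : q ≠ 0) :
    |ctilde q n| ≤ ∑ d ∈ uDivisors n, (d : ℤ) := by
  rw [ctilde]
  calc |∑ d ∈ uDivisors (gcud n q), (d : ℤ) * mustar (q / d)|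
      ≤ ∑ d ∈ uDivisors (gcud n q), |(d : ℤ) * mustar (q / d)| := Finset.abs_sum_le_sum_abs _ _
    _ = ∑ d ∈ uDivisors (gcud n q), (d : ℤ) := by
        refine Finset.sum_congr rfl fun d _ => ?_
        rw [abs_mul, mustar, abs_pow, abs_neg, abs_one, one_pow, mul_one, Int.abs_natCast]
    _ ≤ ∑ d ∈ uDivisors n, (d : ℤ) := by
        apply Finset.sum_le_sum_of_subset_of_nonneg
        · rw [uDivisors_gcud hn hq]
          exact Finset.inter_subset_left
        · intro i _ _; positivity

lemma abs_ctilde_le_real {n q : ℕ} (hn : n ≠ 0) (hq : q ≠ 0) :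
    ‖((ctilde q n : ℤ) : ℂ)‖ ≤ ((∑ d ∈ uDivisors n, (d : ℤ) : ℤ) : ℝ) := by
  rw [Complex.norm_intCast]
  exact_mod_cast abs_ctilde_le hn hq

/-- The key re-indexing equivalence. -/

def pairEquiv : (Σ q : ℕ, {m : ℕ // 0 < m ∧ Nat.Coprime m (q + 1)}) ≃
    (Σ k : ℕ, {d : ℕ // d ∈ uDivisors k}) where
  toFun p := ⟨p.2.1 * (p.1 + 1), ⟨p.1 + 1, by
    obtain ⟨hm, hcop⟩ := p.2.2
    rw [mem_uDivisors]
    refine ⟨⟨p.2.1, mul_comm _ _⟩, ?_, by positivity⟩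
    rw [Nat.mul_div_cancel _ (Nat.succ_pos _)]
    exact hcop.symm⟩⟩
  invFun p := ⟨p.2.1 - 1, ⟨p.1 / p.2.1, by
    have hd := p.2.2
    obtain ⟨hdvd, hcop, hk⟩ := mem_uDivisors.mp hd
    have hd0 : 0 < p.2.1 := pos_of_mem_uDivisors hd
    constructor
    · exact Nat.div_pos (Nat.le_of_dvd (Nat.pos_of_ne_zero hk) hdvd) hd0
    · rw [Nat.sub_add_cancel hd0]
      exact Nat.Coprime.symm hcop⟩⟩
  left_inv := by
    rintro ⟨q, m, hm⟩
    apply Sigma.subtype_ext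
    · simp
    · simp [Nat.mul_div_cancel _ (Nat.succ_pos q)]
  right_inv := by
    rintro ⟨k, d, hd⟩
    have hd0 : 0 < d := pos_of_mem_uDivisors hd
    have hdvd : d ∣ k := (mem_uDivisors.mp hd).1
    apply Sigma.subtype_ext
    · show k / d * (d - 1 + 1) = k
      rw [Nat.sub_add_cancel hd0, Nat.div_mul_cancel hdvd]
    · show d - 1 + 1 = d
      exact Nat.sub_add_cancel hd0

lemma pairEquiv_fst (q : ℕ) (m : {m : ℕ // 0 < m ∧ Nat.Coprime m (q + 1)}) :
    (pairEquiv ⟨q, m⟩).1 = (m : ℕ) * (q + 1) := rfl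

lemma pairEquiv_snd (q : ℕ) (m : {m : ℕ // 0 < m ∧ Nat.Coprime m (q + 1)}) :
    ((pairEquiv ⟨q, m⟩).2 : ℕ) = q + 1 := rfl

set_option maxHeartbeats 2000000 in
theorem expansion_one_variable (g : ℕ → ℂ)
    (h : Summable (fun n : ℕ =>
      (2 : ℝ) ^ (n + 1).primeFactors.card *
        ‖uconv (fun m => (mustar m : ℂ)) g (n + 1)‖ / (n + 1)))
    (a : ℕ → ℂ)
    (ha : ∀ q : ℕ, 0 < q → a q = (1 / (q : ℂ)) *
      ∑' m : {m : ℕ // 0 < m ∧ Nat.Coprime m q},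
        uconv (fun m => (mustar m : ℂ)) g ((m : ℕ) * q) / ((m : ℕ) : ℂ)) :
    ∀ n : ℕ, 0 < n →
      Summable (fun q : ℕ => ‖a (q + 1) * (ctilde (q + 1) n : ℂ)‖) ∧
        g n = ∑' q : ℕ, a (q + 1) * (ctilde (q + 1) n : ℂ) := by
  intro n hn0
  have hn : n ≠ 0 := hn0.ne'
  set f : ℕ → ℂ := uconv (fun m => (mustar m : ℂ)) g with hfdef
  set C : ℝ := ((∑ d ∈ uDivisors n, (d : ℤ) : ℤ) : ℝ) with hC
  have hC0 : 0 ≤ C := by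
    rw [hC]
    exact_mod_cast Finset.sum_nonneg (fun d _ => Int.natCast_nonneg d)
  set Φ : (Σ k : ℕ, {d : ℕ // d ∈ uDivisors k}) → ℂ :=
    fun p => f p.1 / (p.1 : ℂ) * ((ctilde p.2.1 n : ℤ) : ℂ) with hΦdef
  -- the dominating function
  set H : ℕ → ℝ := fun k => ((uDivisors k).card : ℝ) * (‖f k‖ / k * C) with hHdef
  have hH : Summable H := by
    rw [← summable_nat_add_iff 1]
    apply (h.mul_right C).congr
    intro j
    have : ((uDivisors (j + 1)).card : ℝ) = 2 ^ (j + 1).primeFactors.card := by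
      rw [card_uDivisors (Nat.succ_ne_zero j)]; push_cast; ring
    rw [hHdef]
    simp only [this]
    push_cast
    ring
  have habsle : ∀ p : (Σ k : ℕ, {d : ℕ // d ∈ uDivisors k}),
      ‖Φ p‖ ≤ ‖f p.1‖ / p.1 * C := by
    rintro ⟨k, d, hd⟩
    have hk : k ≠ 0 := (mem_uDivisors.mp hd).2.2
    have hd0 : d ≠ 0 := ne_zero_of_mem_uDivisors hd
    rw [hΦdef]
    simp only [norm_mul, norm_div, Complex.norm_natCast]
    exact mul_le_mul_of_nonneg_left (abs_ctilde_le_real hn hd0) (by positivity)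
  have hΦabs : Summable (fun p => ‖Φ p‖) := by
    apply (summable_sigma_of_nonneg (fun p => norm_nonneg _)).mpr
    refine ⟨fun k => Summable.of_finite, ?_⟩
    apply Summable.of_nonneg_of_le (fun k => tsum_nonneg (fun d => norm_nonneg _)) ?_ hH
    intro k
    have heq : ∑' (d : {d : ℕ // d ∈ uDivisors k}), ‖Φ ⟨k, d⟩‖ =
        ∑ d ∈ uDivisors k, ‖f k / k * ((ctilde d n : ℤ) : ℂ)‖ :=
      Finset.tsum_subtype (uDivisors k) (fun d => ‖f k / k * ((ctilde d n : ℤ) : ℂ)‖)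
    rw [heq, hHdef]
    calc ∑ d ∈ uDivisors k, ‖f k / k * ((ctilde d n : ℤ) : ℂ)‖
        ≤ ∑ _d ∈ uDivisors k, ‖f k‖ / k * C := by
          apply Finset.sum_le_sum
          intro d hd
          exact habsle ⟨k, ⟨d, hd⟩⟩
      _ = ((uDivisors k).card : ℝ) * (‖f k‖ / k * C) := by
          rw [Finset.sum_const, nsmul_eq_mul]
  have hΦsum : Summable Φ := Summable.of_norm hΦabs
  -- transport along the equivalence
  have hcompabs : Summable (fun p => ‖Φ (pairEquiv p)‖) :=
    (Equiv.summable_iff pairEquiv).mpr hΦabs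
  have hcomp : Summable (fun p => Φ (pairEquiv p)) :=
    (Equiv.summable_iff pairEquiv).mpr hΦsum
  obtain ⟨hfibabs, houtabs⟩ :=
    (summable_sigma_of_nonneg (fun p => norm_nonneg _)).mp hcompabs
  -- explicit value of Φ ∘ pairEquiv
  have hval : ∀ (q : ℕ) (m : {m : ℕ // 0 < m ∧ Nat.Coprime m (q + 1)}),
      Φ (pairEquiv ⟨q, m⟩) =
        f ((m : ℕ) * (q + 1)) / (((m : ℕ) : ℂ) * ((q : ℕ) + 1)) * ((ctilde (q + 1) n : ℤ) : ℂ) := by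
    intro q m
    rw [hΦdef]
    simp only [pairEquiv_fst, pairEquiv_snd]
    push_cast
    ring
  -- the fiberwise identity needed on both parts
  have hkey : ∀ q : ℕ, ∑' m : {m : ℕ // 0 < m ∧ Nat.Coprime m (q + 1)},
      Φ (pairEquiv ⟨q, m⟩) = a (q + 1) * ((ctilde (q + 1) n : ℤ) : ℂ) := by
    intro q
    rw [ha (q + 1) (Nat.succ_pos q)]
    rw [tsum_congr (hval q)]
    have : ∀ m : {m : ℕ // 0 < m ∧ Nat.Coprime m (q + 1)},
        f ((m : ℕ) * (q + 1)) / (((m : ℕ) : ℂ) * ((q : ℕ) + 1)) * ((ctilde (q + 1) n : ℤ) : ℂ) =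
        (f ((m : ℕ) * (q + 1)) / ((m : ℕ) : ℂ)) *
          (((ctilde (q + 1) n : ℤ) : ℂ) / ((q : ℕ) + 1)) := by
      intro m; rw [← div_div, div_mul_eq_mul_div, mul_div_assoc]
    rw [tsum_congr this, tsum_mul_right]
    push_cast
    ring
  -- Part 1: summability
  have hbound : ∀ q : ℕ, ‖a (q + 1) * ((ctilde (q + 1) n : ℤ) : ℂ)‖ ≤
      ∑' m : {m : ℕ // 0 < m ∧ Nat.Coprime m (q + 1)}, ‖Φ (pairEquiv ⟨q, m⟩)‖ := by
    intro q
    rw [← hkey q]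
    have hns : Summable (fun m : {m : ℕ // 0 < m ∧ Nat.Coprime m (q + 1)} =>
        ‖Φ (pairEquiv ⟨q, m⟩)‖) := by
      simpa using hfibabs q
    simpa using
      norm_tsum_le_tsum_norm (f := fun m : {m : ℕ // 0 < m ∧ Nat.Coprime m (q + 1)} =>
        Φ (pairEquiv ⟨q, m⟩)) hns
  have part1 : Summable (fun q : ℕ => ‖a (q + 1) * (ctilde (q + 1) n : ℂ)‖) :=
    Summable.of_nonneg_of_le (fun q => norm_nonneg _) hbound houtabs
  refine ⟨part1, ?_⟩
  -- Part 2: the identity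
  have hfib : ∀ q : ℕ, Summable (fun m : {m : ℕ // 0 < m ∧ Nat.Coprime m (q + 1)} =>
      Φ (pairEquiv ⟨q, m⟩)) :=
    fun q => Summable.of_norm (by simpa using hfibabs q)
  have hfib2 : ∀ k : ℕ, Summable (fun d : {d : ℕ // d ∈ uDivisors k} => Φ ⟨k, d⟩) :=
    fun k => Summable.of_finite
  have step2 : ∑ k ∈ uDivisors n, f k = ∑' k : ℕ, ∑' d : {d : ℕ // d ∈ uDivisors k}, Φ ⟨k, d⟩ := by
    have hpt : ∀ k : ℕ, ∑' d : {d : ℕ // d ∈ uDivisors k}, Φ ⟨k, d⟩ =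
        if k ∈ uDivisors n then f k else 0 := by
      intro k
      have h1 : ∑' d : {d : ℕ // d ∈ uDivisors k}, Φ ⟨k, d⟩ =
          ∑ d ∈ uDivisors k, f k / k * ((ctilde d n : ℤ) : ℂ) :=
        Finset.tsum_subtype (uDivisors k) (fun d => f k / k * ((ctilde d n : ℤ) : ℂ))
      rw [h1, ← Finset.mul_sum, ← Int.cast_sum, sum_ctilde_uDivisors hn k]
      by_cases hk : k ∈ uDivisors n
      · rw [if_pos hk, if_pos hk]
        have hk0 : (k : ℂ) ≠ 0 := Nat.cast_ne_zero.mpr (ne_zero_of_mem_uDivisors hk)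
        push_cast
        field_simp
      · rw [if_neg hk, if_neg hk]
        simp
    rw [tsum_congr hpt, tsum_eq_sum (s := uDivisors n) (fun k hk => if_neg hk)]
    exact Finset.sum_congr rfl (fun k hk => (if_pos hk).symm)
  calc g n = ∑ k ∈ uDivisors n, f k := (sum_uDivisors_uconv g hn).symm
    _ = ∑' k : ℕ, ∑' d : {d : ℕ // d ∈ uDivisors k}, Φ ⟨k, d⟩ := step2
    _ = ∑' p : (Σ k : ℕ, {d : ℕ // d ∈ uDivisors k}), Φ p := (hΦsum.tsum_sigma' hfib2).symm
    _ = ∑' p : (Σ q : ℕ, {m : ℕ // 0 < m ∧ Nat.Coprime m (q + 1)}), Φ (pairEquiv p) :=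
        (pairEquiv.tsum_eq Φ).symm
    _ = ∑' q : ℕ, ∑' m : {m : ℕ // 0 < m ∧ Nat.Coprime m (q + 1)}, Φ (pairEquiv ⟨q, m⟩) :=
        hcomp.tsum_sigma' hfib
    _ = ∑' q : ℕ, a (q + 1) * (ctilde (q + 1) n : ℂ) := tsum_congr hkey
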